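/- Let X, Y be topological spaces, and let M be the mapping-cylinder-type space obtained from the disjoint union of q copies of X × Y (labeled by cone points v_1,…,v_q) and X × C, where C is the cone on q points, glued by identifying (x, v_i) ∈ X × C with (ι(x), v_i) ∈ X × Y for a fixed map ι : X → X × Y of the form x ↦ (x, *) with * a basepoint. If Y is path-connected and well-pointed, then M is homotopy equivalent to X × (Y ∨ … ∨ Y) (q-fold wedge), where X × ⋁_i Y is the quotient of ⨆_i X × Y identifying (x, *, v_i) ∼ (x, *, v_j) for all i, j. -/

import Mathlib

open unitInterval

/-- The cone on `q` points: `([0,1] × {v_1,…,v_q}) / ((0,v_i) ∼ (0,v_j))`. -/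
def ConeQ (q : ℕ) : Type :=
  Quot (fun (a b : I × Fin q) => a.1 = 0 ∧ b.1 = 0)

instance (q : ℕ) : TopologicalSpace (ConeQ q) :=
  instTopologicalSpaceQuot

/-- The mapping-cylinder-type space `M`: glue `⨆_i X × Y × {v_i}` to `X × C` by
identifying `(x, (1, v_i)) ∈ X × C` with `(ι(x), v_i) = (x, y₀, v_i)`. -/
def GlueM (X Y : Type) [TopologicalSpace X] [TopologicalSpace Y] (y₀ : Y) (q : ℕ) : Type :=
  Quot (fun (a b : (X × Y × Fin q) ⊕ (X × ConeQ q)) =>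
    ∃ (x : X) (i : Fin q),
      a = Sum.inl (x, y₀, i) ∧ b = Sum.inr (x, Quot.mk _ (1, i)))

instance (X Y : Type) [TopologicalSpace X] [TopologicalSpace Y] (y₀ : Y) (q : ℕ) :
    TopologicalSpace (GlueM X Y y₀ q) :=
  instTopologicalSpaceQuot

/-- `X × (Y ∨ ⋯ ∨ Y)`: the quotient of `⨆_i X × Y × {v_i}` identifying
`(x, y₀, v_i) ∼ (x, y₀, v_j)`. -/
def ProdWedge (X Y : Type) [TopologicalSpace X] [TopologicalSpace Y] (y₀ : Y) (q : ℕ) : Type :=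
  Quot (fun (a b : X × Y × Fin q) => ∃ (x : X) (i j : Fin q),
    a = (x, y₀, i) ∧ b = (x, y₀, j))

instance (X Y : Type) [TopologicalSpace X] [TopologicalSpace Y] (y₀ : Y) (q : ℕ) :
    TopologicalSpace (ProdWedge X Y y₀ q) :=
  instTopologicalSpaceQuot

open Topology

/-! ### Auxiliary definitions -/

section Aux

variable (X Y : Type) [TopologicalSpace X] [TopologicalSpace Y] (y₀ : Y) (q : ℕ)

/-- Points of the cone. -/
def cpt (t : I) (i : Fin q) : ConeQ q := Quot.mk _ (t, i)

lemma cpt_zero (i j : Fin q) : cpt q 0 i = cpt q 0 j := Quot.sound ⟨rfl, rfl⟩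

lemma continuous_cpt : Continuous (fun p : I × Fin q => cpt q p.1 p.2) :=
  continuous_quot_mk

/-- Points of the glued space. -/
def glue (a : (X × Y × Fin q) ⊕ (X × ConeQ q)) : GlueM X Y y₀ q := Quot.mk _ a

lemma glue_eq (x : X) (i : Fin q) :
    glue X Y y₀ q (Sum.inl (x, y₀, i)) = glue X Y y₀ q (Sum.inr (x, cpt q 1 i)) :=
  Quot.sound ⟨x, i, rfl, rfl⟩

lemma continuous_glue : Continuous (glue X Y y₀ q) := continuous_quot_mk

/-- Points of the wedge. -/
def wmk (a : X × Y × Fin q) : ProdWedge X Y y₀ q := Quot.mk _ a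

lemma wmk_eq (x : X) (i j : Fin q) :
    wmk X Y y₀ q (x, y₀, i) = wmk X Y y₀ q (x, y₀, j) :=
  Quot.sound ⟨x, i, j, rfl, rfl⟩

lemma continuous_wmk : Continuous (wmk X Y y₀ q) := continuous_quot_mk

/-- Multiplication on the unit interval. -/
def mulI (a b : I) : I := ⟨(a : ℝ) * b, unitInterval.mul_mem a.2 b.2⟩

lemma continuous_mulI : Continuous (fun p : I × I => mulI p.1 p.2) :=
  Continuous.subtype_mk
    ((continuous_subtype_val.comp continuous_fst).mul
      (continuous_subtype_val.comp continuous_snd)) _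

lemma mulI_one (a : I) : mulI a 1 = a := Subtype.ext (mul_one _)
lemma mulI_zero (a : I) : mulI a 0 = 0 := Subtype.ext (mul_zero _)
lemma one_mulI (a : I) : mulI 1 a = a := Subtype.ext (one_mul _)
lemma symm_one_mulI (a : I) : mulI (σ 1) a = 0 := by
  rw [unitInterval.symm_one]; exact Subtype.ext (zero_mul _)

/-- Embedding of the cone into the plane, to prove Hausdorffness. -/
def coneEmb : ConeQ q → ℝ × ℝ :=
  Quot.lift (fun p : I × Fin q => ((p.1 : ℝ), (p.1 : ℝ) * (p.2 : ℕ)))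
    (by
      rintro ⟨t, i⟩ ⟨s, j⟩ ⟨ht, hs⟩
      have ht' : t = 0 := ht
      have hs' : s = 0 := hs
      subst ht'; subst hs'
      simp)

lemma coneEmb_injective : Function.Injective (coneEmb q) := by
  intro a b
  induction a using Quot.ind with | _ a =>
  induction b using Quot.ind with | _ b =>
  obtain ⟨t, i⟩ := a
  obtain ⟨s, j⟩ := b
  intro h
  simp only [coneEmb, Prod.mk.injEq] at h
  obtain ⟨h1, h2⟩ := h
  by_cases h0 : (t : ℝ) = 0
  · exact Quot.sound ⟨Subtype.ext h0, Subtype.ext (h1 ▸ h0)⟩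
  · have hij : ((i : ℕ) : ℝ) = ((j : ℕ) : ℝ) := by
      have := h2
      rw [h1] at this
      exact mul_left_cancel₀ (h1 ▸ h0) this
    have : i = j := by
      have : (i : ℕ) = (j : ℕ) := Nat.cast_injective hij
      exact Fin.ext this
    subst this
    have : t = s := Subtype.ext h1
    subst this
    rfl

lemma coneQ_t2 : T2Space (ConeQ q) :=
  T2Space.of_injective_continuous (coneEmb_injective q)
    (continuous_quot_lift _ (by fun_prop))

lemma isQuotientMap_kappa :
    IsQuotientMap (fun p : X × (I × Fin q) => (p.1, cpt q p.2.1 p.2.2)) := by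
  haveI := coneQ_t2 q
  have hpi : IsProperMap (fun p : I × Fin q => cpt q p.1 p.2) :=
    (continuous_cpt q).isProperMap
  have hprod : IsProperMap (Prod.map (id : X → X) (fun p : I × Fin q => cpt q p.1 p.2)) :=
    isProperMap_id.prodMap hpi
  have hcl : IsClosedMap (fun p : X × (I × Fin q) => (p.1, cpt q p.2.1 p.2.2)) := hprod.isClosedMap
  refine hcl.isQuotientMap (by exact hprod.continuous) ?_
  rintro ⟨x, c⟩
  induction c using Quot.ind with | _ c =>
  exact ⟨(x, c), rfl⟩

end Aux

/-! ### The subspace `Y × {0} ∪ {y₀} × I` and the map `Φ` -/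

/-- The subspace `(Y × {0}) ∪ ({y₀} × I)` of `Y × I`. -/
abbrev SP (Y : Type) [TopologicalSpace Y] (y₀ : Y) : Type :=
  {p : Y × I // p.2 = 0 ∨ p.1 = y₀}

section Phi

variable (X Y : Type) [TopologicalSpace X] [TopologicalSpace Y] (y₀ : Y) (q : ℕ)

open Classical in
/-- The basic map `X × Fin q × SP → M` used to build the contraction homotopy. -/
noncomputable def Phi (xi : X × Fin q) (p : SP Y y₀) : GlueM X Y y₀ q :=
  if p.1.2 = 0 then glue X Y y₀ q (Sum.inl (xi.1, p.1.1, xi.2))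
  else glue X Y y₀ q (Sum.inr (xi.1, cpt q (σ p.1.2) xi.2))

lemma Phi_zero (x : X) (i : Fin q) (y : Y) (h : ((y, 0) : Y × I).2 = 0 ∨ (y, (0:I)).1 = y₀) :
    Phi X Y y₀ q (x, i) ⟨(y, 0), h⟩ = glue X Y y₀ q (Sum.inl (x, y, i)) := by
  simp [Phi]

lemma Phi_basept (x : X) (i : Fin q) (s : I) (h : ((y₀, s) : Y × I).2 = 0 ∨ (y₀, s).1 = y₀) :
    Phi X Y y₀ q (x, i) ⟨(y₀, s), h⟩ =
      glue X Y y₀ q (Sum.inr (x, cpt q (σ s) i)) := by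
  by_cases hs : s = 0
  · subst hs
    rw [Phi_zero, unitInterval.symm_zero]
    exact glue_eq X Y y₀ q x i
  · simp [Phi, hs]

lemma Phi_eq_of_ne (x : X) (i : Fin q) (y : Y) (s : I) (hs : s ≠ 0)
    (h : ((y, s) : Y × I).2 = 0 ∨ (y, s).1 = y₀) :
    Phi X Y y₀ q (x, i) ⟨(y, s), h⟩ =
      glue X Y y₀ q (Sum.inr (x, cpt q (σ s) i)) := by
  simp [Phi, hs]

/-- Extraction of box neighbourhoods in a triple product. -/
lemma prod3_extract {α β γ : Type*} [TopologicalSpace α] [TopologicalSpace β]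
    [TopologicalSpace γ] {V : Set (α × β × γ)} (hV : IsOpen V) {a : α} {b : β} {c : γ}
    (h : (a, b, c) ∈ V) :
    ∃ A B C, IsOpen A ∧ IsOpen B ∧ IsOpen C ∧ a ∈ A ∧ b ∈ B ∧ c ∈ C ∧
      ∀ a' b' c', a' ∈ A → b' ∈ B → c' ∈ C → (a', b', c') ∈ V := by
  obtain ⟨A, W, hA, hW, haA, hbW, hsub⟩ := isOpen_prod_iff.1 hV a (b, c) h
  obtain ⟨B, C, hB, hC, hbB, hcC, hsub2⟩ := isOpen_prod_iff.1 hW b c hbW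
  exact ⟨A, B, C, hA, hB, hC, haA, hbB, hcC,
    fun a' b' c' ha hb hc => hsub ⟨ha, hsub2 ⟨hb, hc⟩⟩⟩

lemma Phi_continuous :
    Continuous (fun p : (X × Fin q) × SP Y y₀ => Phi X Y y₀ q p.1 p.2) := by
  rw [continuous_def]
  intro U hU
  have hV1 : IsOpen {p : X × Y × Fin q | glue X Y y₀ q (Sum.inl p) ∈ U} :=
    hU.preimage ((continuous_glue X Y y₀ q).comp continuous_inl)
  have hV2 : IsOpen {p : X × I × Fin q |
      glue X Y y₀ q (Sum.inr (p.1, cpt q p.2.1 p.2.2)) ∈ U} := by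
    refine hU.preimage ?_
    exact (continuous_glue X Y y₀ q).comp (continuous_inr.comp
      (continuous_fst.prodMk ((continuous_cpt q).comp continuous_snd)))
  rw [isOpen_iff_forall_mem_open]
  rintro ⟨⟨x, i⟩, ⟨⟨y, s⟩, hp⟩⟩ hmem
  simp only [Set.mem_preimage] at hmem
  by_cases hs : s = 0
  · subst hs
    rw [Phi_zero] at hmem
    obtain ⟨A, B, c, hA, hB, hc, hxA, hyB, hic, hsub⟩ := prod3_extract hV1 hmem
    by_cases hy0 : y₀ ∈ B
    · -- the saturated case: also get a neighbourhood in the cone direction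
      have h2 : (x, (1 : I), i) ∈ {p : X × I × Fin q |
          glue X Y y₀ q (Sum.inr (p.1, cpt q p.2.1 p.2.2)) ∈ U} := by
        have := hsub x y₀ i hxA hy0 hic
        simpa only [Set.mem_setOf_eq, ← glue_eq X Y y₀ q x i] using this
      obtain ⟨A', J, c', hA', hJ, hc', hxA', h1J, hic', hsub2⟩ := prod3_extract hV2 h2
      refine ⟨((A ∩ A') ×ˢ (c ∩ c')) ×ˢ
        (Subtype.val ⁻¹' (B ×ˢ (σ ⁻¹' J))), ?_, ?_, ?_⟩
      · rintro ⟨⟨x', i'⟩, ⟨⟨y', s'⟩, hp'⟩⟩ ⟨⟨⟨hxa, hxa'⟩, hi, hi'⟩, hyB', hsJ⟩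
        simp only [Set.mem_preimage]
        by_cases hs' : s' = 0
        · subst hs'
          rw [Phi_zero]
          exact hsub x' y' i' hxa hyB' hi
        · rw [Phi_eq_of_ne X Y y₀ q x' i' y' s' hs']
          exact hsub2 x' (σ s') i' hxa' hsJ hi'
      · exact (((hA.inter hA').prod (hc.inter hc')).prod
          ((hB.prod (hJ.preimage unitInterval.continuous_symm)).preimage
            continuous_subtype_val))
      · refine ⟨⟨⟨hxA, hxA'⟩, hic, hic'⟩, hyB, ?_⟩
        simp only [Set.mem_preimage, unitInterval.symm_zero]
        exact h1J
    · refine ⟨(A ×ˢ c) ×ˢ (Subtype.val ⁻¹' (B ×ˢ (Set.univ : Set I))), ?_, ?_, ?_⟩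
      · rintro ⟨⟨x', i'⟩, ⟨⟨y', s'⟩, hp'⟩⟩ ⟨⟨hxa, hi⟩, hyB', -⟩
        simp only [Set.mem_preimage]
        by_cases hs' : s' = 0
        · subst hs'
          rw [Phi_zero]
          exact hsub x' y' i' hxa hyB' hi
        · exact absurd (hp'.resolve_left hs' ▸ hyB' : y₀ ∈ B) hy0
      · exact ((hA.prod hc).prod ((hB.prod isOpen_univ).preimage continuous_subtype_val))
      · exact ⟨⟨hxA, hic⟩, hyB, Set.mem_univ _⟩
  · rw [Phi_eq_of_ne X Y y₀ q x i y s hs] at hmem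
    have h2 : (x, σ s, i) ∈ {p : X × I × Fin q |
        glue X Y y₀ q (Sum.inr (p.1, cpt q p.2.1 p.2.2)) ∈ U} := hmem
    obtain ⟨A', J, c', hA', hJ, hc', hxA', hsJ, hic', hsub2⟩ := prod3_extract hV2 h2
    refine ⟨(A' ×ˢ c') ×ˢ (Subtype.val ⁻¹'
      ((Set.univ : Set Y) ×ˢ ((σ ⁻¹' J) ∩ {(0 : I)}ᶜ))), ?_, ?_, ?_⟩
    · rintro ⟨⟨x', i'⟩, ⟨⟨y', s'⟩, hp'⟩⟩ ⟨⟨hxa', hi'⟩, -, hsJ', hs'0⟩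
      simp only [Set.mem_preimage]
      have hs' : s' ≠ 0 := hs'0
      rw [Phi_eq_of_ne X Y y₀ q x' i' y' s' hs']
      exact hsub2 x' (σ s') i' hxa' hsJ' hi'
    · exact ((hA'.prod hc').prod
        ((isOpen_univ.prod (((hJ.preimage unitInterval.continuous_symm)).inter
          isOpen_compl_singleton)).preimage continuous_subtype_val))
    · exact ⟨⟨hxA', hic'⟩, Set.mem_univ _, hsJ, hs⟩

end Phi

/-! ### The maps and homotopies -/

section Main

variable (X Y : Type) [TopologicalSpace X] [TopologicalSpace Y] (y₀ : Y) (q : ℕ)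

lemma Continuous.cpt' {α : Type} [TopologicalSpace α] {f : α → I} {g : α → Fin q}
    (hf : Continuous f) (hg : Continuous g) : Continuous fun a => cpt q (f a) (g a) :=
  (continuous_cpt q).comp (hf.prodMk hg)

lemma Continuous.mulI' {α : Type} [TopologicalSpace α] {f g : α → I}
    (hf : Continuous f) (hg : Continuous g) : Continuous fun a => mulI (f a) (g a) :=
  continuous_mulI.comp (hf.prodMk hg)

variable (G : C(I × Y, SP Y y₀))

/-- The collapse map `M → X × ⋁ Y`. -/
noncomputable def fM : C(GlueM X Y y₀ q, ProdWedge X Y y₀ q) where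
  toFun := Quot.lift (Sum.elim
      (fun p => wmk X Y y₀ q p)
      (fun p => Quot.lift (fun c : I × Fin q => wmk X Y y₀ q (p.1, y₀, c.2))
        (fun a b _ => wmk_eq X Y y₀ q p.1 a.2 b.2) p.2))
    (by rintro a b ⟨x, i, rfl, rfl⟩; rfl)
  continuous_toFun := by
    apply continuous_quot_lift
    apply Continuous.sumElim
    · exact continuous_wmk X Y y₀ q
    · rw [(isQuotientMap_kappa X q).continuous_iff]
      exact (continuous_wmk X Y y₀ q).comp
        ((continuous_fst).prodMk (continuous_const.prodMk continuous_snd.snd))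

/-- The homotopy inverse `X × ⋁ Y → M`. -/
noncomputable def gW (hGb : ∀ t, G (t, y₀) = ⟨(y₀, t), Or.inr rfl⟩) :
    C(ProdWedge X Y y₀ q, GlueM X Y y₀ q) where
  toFun := Quot.lift (fun p => Phi X Y y₀ q (p.1, p.2.2) (G (1, p.2.1)))
    (by
      rintro a b ⟨x, i, j, rfl, rfl⟩
      show Phi X Y y₀ q (x, i) (G (1, y₀)) = Phi X Y y₀ q (x, j) (G (1, y₀))
      rw [hGb 1, Phi_basept, Phi_basept, unitInterval.symm_one]
      exact congrArg (fun c => glue X Y y₀ q (Sum.inr (x, c))) (cpt_zero q i j))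
  continuous_toFun := by
    apply continuous_quot_lift
    exact (Phi_continuous X Y y₀ q).comp
      ((continuous_fst.prodMk continuous_snd.snd).prodMk
        (G.continuous.comp (continuous_const.prodMk continuous_snd.fst)))

/-- The big homotopy on the `X × Y × Fin q` part. -/
noncomputable def Hbig : C((X × Y × Fin q) × I, GlueM X Y y₀ q) where
  toFun := fun z => Phi X Y y₀ q (z.1.1, z.1.2.2) (G (z.2, z.1.2.1))
  continuous_toFun := (Phi_continuous X Y y₀ q).comp
    ((continuous_fst.fst.prodMk continuous_fst.snd.snd).prodMk
      (G.continuous.comp (continuous_snd.prodMk continuous_fst.snd.fst)))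

/-- The homotopy on the cone part. -/
noncomputable def Hc : C((X × (I × Fin q)) × I, GlueM X Y y₀ q) where
  toFun := fun z =>
    glue X Y y₀ q (Sum.inr (z.1.1, cpt q (mulI (σ z.2) z.1.2.1) z.1.2.2))
  continuous_toFun := (continuous_glue X Y y₀ q).comp (continuous_inr.comp
    (continuous_fst.fst.prodMk
      (Continuous.cpt' q
        (Continuous.mulI' (unitInterval.continuous_symm.comp continuous_snd)
          continuous_fst.snd.fst)
        continuous_fst.snd.snd)))

/-- The contraction homotopy of `M`, in curried form. -/
noncomputable def HM (hGb : ∀ t, G (t, y₀) = ⟨(y₀, t), Or.inr rfl⟩) :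
    C(GlueM X Y y₀ q, C(I, GlueM X Y y₀ q)) where
  toFun := Quot.lift (Sum.elim
      (fun p => (Hbig X Y y₀ q G).curry p)
      (fun p => Quot.lift (fun c : I × Fin q => (Hc X Y y₀ q).curry (p.1, c))
        (fun c c' hcc => ContinuousMap.ext fun s => by
          obtain ⟨h0, h0'⟩ := hcc
          show glue X Y y₀ q (Sum.inr (p.1, cpt q (mulI (σ s) c.1) c.2)) =
            glue X Y y₀ q (Sum.inr (p.1, cpt q (mulI (σ s) c'.1) c'.2))
          rw [h0, h0', mulI_zero]
          exact congrArg (fun k => glue X Y y₀ q (Sum.inr (p.1, k))) (cpt_zero q c.2 c'.2))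
        p.2))
    (by
      rintro a b ⟨x, i, rfl, rfl⟩
      refine ContinuousMap.ext fun s => ?_
      show Phi X Y y₀ q (x, i) (G (s, y₀)) =
        glue X Y y₀ q (Sum.inr (x, cpt q (mulI (σ s) 1) i))
      rw [hGb s, Phi_basept, mulI_one])
  continuous_toFun := by
    apply continuous_quot_lift
    apply Continuous.sumElim
    · exact ((Hbig X Y y₀ q G).curry).continuous
    · rw [(isQuotientMap_kappa X q).continuous_iff]
      exact ((Hc X Y y₀ q).curry).continuous

end Main

section Main2

variable (X Y : Type) [TopologicalSpace X] [TopologicalSpace Y] (y₀ : Y) (q : ℕ)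
variable (G : C(I × Y, SP Y y₀))

/-- The homotopy on `W`, in curried form. -/
noncomputable def KW (hGb : ∀ t, G (t, y₀) = ⟨(y₀, t), Or.inr rfl⟩) :
    C(ProdWedge X Y y₀ q, C(I, ProdWedge X Y y₀ q)) where
  toFun := Quot.lift (fun p => ((fM X Y y₀ q).comp (Hbig X Y y₀ q G)).curry p)
    (by
      rintro a b ⟨x, i, j, rfl, rfl⟩
      refine ContinuousMap.ext fun s => ?_
      show fM X Y y₀ q (Phi X Y y₀ q (x, i) (G (s, y₀))) =
        fM X Y y₀ q (Phi X Y y₀ q (x, j) (G (s, y₀)))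
      rw [hGb s, Phi_basept, Phi_basept]
      show wmk X Y y₀ q (x, y₀, i) = wmk X Y y₀ q (x, y₀, j)
      exact wmk_eq X Y y₀ q x i j)
  continuous_toFun := continuous_quot_lift _
    (((fM X Y y₀ q).comp (Hbig X Y y₀ q G)).curry).continuous

end Main2

/-- If `Y` is path-connected and well-pointed at `y₀` (homotopy extension property for the
pair `(Y, {y₀})`), then the glued space `M` is homotopy equivalent to
`X × (Y ∨ ⋯ ∨ Y)` (q-fold wedge). -/
theorem stmt8 (X Y : Type) [TopologicalSpace X] [TopologicalSpace Y] (y₀ : Y) (q : ℕ)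
    (hconn : PathConnectedSpace Y)
    (hwp : ∀ (Z : Type) [TopologicalSpace Z] (f : C(Y, Z)) (g : C(I, Z)),
      g 0 = f y₀ → ∃ G : C(I × Y, Z), (∀ y, G (0, y) = f y) ∧ (∀ t, G (t, y₀) = g t)) :
    Nonempty (ContinuousMap.HomotopyEquiv (GlueM X Y y₀ q) (ProdWedge X Y y₀ q)) := by
  obtain ⟨G, hG0, hGb⟩ := hwp (SP Y y₀)
    ⟨fun y => ⟨(y, 0), Or.inl rfl⟩,
      Continuous.subtype_mk (continuous_id.prodMk continuous_const) _⟩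
    ⟨fun s => ⟨(y₀, s), Or.inr rfl⟩,
      Continuous.subtype_mk (continuous_const.prodMk continuous_id) _⟩
    (Subtype.ext rfl)
  simp only [ContinuousMap.coe_mk] at hG0 hGb
  -- the homotopy `id_M ≃ gW ∘ fM`
  have A : ContinuousMap.Homotopy (ContinuousMap.id (GlueM X Y y₀ q))
      ((gW X Y y₀ q G hGb).comp (fM X Y y₀ q)) :=
    { toContinuousMap := ((HM X Y y₀ q G hGb).uncurry).comp
        ⟨Prod.swap, continuous_swap⟩
      map_zero_left := by
        intro m
        show (HM X Y y₀ q G hGb) m 0 = m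
        induction m using Quot.ind with | _ a =>
        rcases a with ⟨x, y, i⟩ | ⟨x, c⟩
        · rw [show (HM X Y y₀ q G hGb) (Quot.mk _ (Sum.inl (x, y, i))) =
            (Hbig X Y y₀ q G).curry (x, y, i) from rfl]
          show Phi X Y y₀ q (x, i) (G (0, y)) = glue X Y y₀ q (Sum.inl (x, y, i))
          rw [hG0 y, Phi_zero]
        · induction c using Quot.ind with | _ c =>
          obtain ⟨t, i⟩ := c
          rw [show (HM X Y y₀ q G hGb) (Quot.mk _ (Sum.inr (x, Quot.mk _ (t, i)))) =
            (Hc X Y y₀ q).curry (x, (t, i)) from rfl]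
          show glue X Y y₀ q (Sum.inr (x, cpt q (mulI (σ 0) t) i)) =
            glue X Y y₀ q (Sum.inr (x, cpt q t i))
          rw [unitInterval.symm_zero, one_mulI]
      map_one_left := by
        intro m
        show (HM X Y y₀ q G hGb) m 1 = ((gW X Y y₀ q G hGb).comp (fM X Y y₀ q)) m
        induction m using Quot.ind with | _ a =>
        rcases a with ⟨x, y, i⟩ | ⟨x, c⟩
        · erw [show (HM X Y y₀ q G hGb) (Quot.mk _ (Sum.inl (x, y, i))) =
              (Hbig X Y y₀ q G).curry (x, y, i) from rfl,
            ContinuousMap.comp_apply,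
            show fM X Y y₀ q (Quot.mk _ (Sum.inl (x, y, i))) =
              wmk X Y y₀ q (x, y, i) from rfl]
          rfl
        · induction c using Quot.ind with | _ c =>
          obtain ⟨t, i⟩ := c
          erw [show (HM X Y y₀ q G hGb) (Quot.mk _ (Sum.inr (x, Quot.mk _ (t, i)))) =
              (Hc X Y y₀ q).curry (x, (t, i)) from rfl,
            ContinuousMap.comp_apply,
            show fM X Y y₀ q (Quot.mk _ (Sum.inr (x, Quot.mk _ (t, i)))) =
              wmk X Y y₀ q (x, y₀, i) from rfl]
          show glue X Y y₀ q (Sum.inr (x, cpt q (mulI (σ 1) t) i)) =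
            Phi X Y y₀ q (x, i) (G (1, y₀))
          rw [hGb 1, Phi_basept, symm_one_mulI, unitInterval.symm_one] }
  -- the homotopy `id_W ≃ fM ∘ gW`
  have B : ContinuousMap.Homotopy (ContinuousMap.id (ProdWedge X Y y₀ q))
      ((fM X Y y₀ q).comp (gW X Y y₀ q G hGb)) :=
    { toContinuousMap := ((KW X Y y₀ q G hGb).uncurry).comp
        ⟨Prod.swap, continuous_swap⟩
      map_zero_left := by
        intro w
        show (KW X Y y₀ q G hGb) w 0 = w
        induction w using Quot.ind with | _ p =>
        obtain ⟨x, y, i⟩ := p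
        rw [show (KW X Y y₀ q G hGb) (Quot.mk _ (x, y, i)) =
          ((fM X Y y₀ q).comp (Hbig X Y y₀ q G)).curry (x, y, i) from rfl]
        show fM X Y y₀ q (Phi X Y y₀ q (x, i) (G (0, y))) = wmk X Y y₀ q (x, y, i)
        rw [hG0 y, Phi_zero]
        rfl
      map_one_left := by
        intro w
        show (KW X Y y₀ q G hGb) w 1 = ((fM X Y y₀ q).comp (gW X Y y₀ q G hGb)) w
        induction w using Quot.ind with | _ p =>
        obtain ⟨x, y, i⟩ := p
        erw [show (KW X Y y₀ q G hGb) (Quot.mk _ (x, y, i)) =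
            ((fM X Y y₀ q).comp (Hbig X Y y₀ q G)).curry (x, y, i) from rfl,
          ContinuousMap.comp_apply,
          show gW X Y y₀ q G hGb (Quot.mk _ (x, y, i)) =
            Phi X Y y₀ q (x, i) (G (1, y)) from rfl]
        rfl }
  exact ⟨⟨fM X Y y₀ q, gW X Y y₀ q G hGb, ⟨A.symm⟩, ⟨B.symm⟩⟩⟩
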